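/- For all n ≥ 5, the automorphism group of the modified bubble-sort graph of dimension n is isomorphic to the direct product S_n × D_{2n}, i.e., Aut(MB_n) ≅ Equiv.Perm (Fin n) × DihedralGroup n (where DihedralGroup n has order 2n). -/

import Mathlib

open Equiv

/-- The Cayley graph of `Sₙ = Perm (Fin n)` with connection set `S`:
vertices `h, g` are adjacent iff `g * h⁻¹ ∈ S` (for a symmetric identity-free
set `S`, such as a set of transpositions, `fromRel` yields exactly this relation). -/
def Cay (n : ℕ) (S : Set (Equiv.Perm (Fin n))) : SimpleGraph (Equiv.Perm (Fin n)) :=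
  SimpleGraph.fromRel (fun h g => g * h⁻¹ ∈ S)

/-- The transposition graph `T(S)` of `S`: vertices `i, j ∈ Fin n` are adjacent
iff the transposition `swap i j ∈ S`. -/
def TransGraph (n : ℕ) (S : Set (Equiv.Perm (Fin n))) : SimpleGraph (Fin n) :=
  SimpleGraph.fromRel (fun i j => Equiv.swap i j ∈ S)

/-- The automorphism group of a graph, as a subgroup of the symmetric group on
its vertex set. -/
def graphAut {V : Type*} (G : SimpleGraph V) : Subgroup (Equiv.Perm V) where
  carrier := {f | ∀ x y, G.Adj (f x) (f y) ↔ G.Adj x y}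
  one_mem' := by intro x y; simp
  mul_mem' := by
    intro a b ha hb x y
    simp only [Equiv.Perm.mul_apply]
    rw [ha, hb]
  inv_mem' := by
    intro a ha x y
    rw [← ha (a⁻¹ x) (a⁻¹ y)]
    simp

/-- The image `R(Sₙ)` of the right regular representation of `Sₙ` inside `Sym(Sₙ)`:
all permutations of the form `x ↦ x * a`. -/
def Rrep (n : ℕ) : Subgroup (Equiv.Perm (Equiv.Perm (Fin n))) where
  carrier := {f | ∃ a : Equiv.Perm (Fin n), f = Equiv.mulRight a}
  one_mem' := ⟨1, by ext x; simp⟩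
  mul_mem' := by
    rintro _ _ ⟨a, rfl⟩ ⟨b, rfl⟩
    exact ⟨b * a, by ext x; simp [mul_assoc]⟩
  inv_mem' := by
    rintro _ ⟨a, rfl⟩
    exact ⟨a⁻¹, by ext x; simp⟩

/-- The image `λ(Sₙ)` of the left regular representation of `Sₙ` inside `Sym(Sₙ)`:
all permutations of the form `x ↦ b⁻¹ * x`. -/
def LrepAll (n : ℕ) : Subgroup (Equiv.Perm (Equiv.Perm (Fin n))) where
  carrier := {f | ∃ b : Equiv.Perm (Fin n), f = Equiv.mulLeft b⁻¹}
  one_mem' := ⟨1, by ext x; simp⟩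
  mul_mem' := by
    rintro _ _ ⟨a, rfl⟩ ⟨b, rfl⟩
    exact ⟨b * a, by ext x; simp [mul_assoc]⟩
  inv_mem' := by
    rintro _ ⟨a, rfl⟩
    exact ⟨a⁻¹, by ext x; simp⟩

/-- The subgroup `λ(Aut(T(S))) = { x ↦ a⁻¹ * x : a ∈ Aut(T(S)) }` of `Sym(Sₙ)`. -/
def Lrep (n : ℕ) (S : Set (Equiv.Perm (Fin n))) :
    Subgroup (Equiv.Perm (Equiv.Perm (Fin n))) where
  carrier := {f | ∃ a ∈ graphAut (TransGraph n S), f = Equiv.mulLeft a⁻¹}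
  one_mem' := ⟨1, one_mem _, by ext x; simp⟩
  mul_mem' := by
    rintro _ _ ⟨a, ha, rfl⟩ ⟨b, hb, rfl⟩
    exact ⟨b * a, mul_mem hb ha, by ext x; simp [mul_assoc]⟩
  inv_mem' := by
    rintro _ ⟨a, ha, rfl⟩
    exact ⟨a⁻¹, inv_mem ha, by ext x; simp⟩

set_option linter.unusedSectionVars false

namespace MBS

open scoped Fin.NatCast Fin.IntCast Fin.CommRing

variable {n : ℕ} [NeZero n]

def sg (hn : 5 ≤ n) (i : Fin n) : Perm (Fin n) := Equiv.swap i (i + ⟨1, Nat.lt_of_lt_of_le (by norm_num) hn⟩)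

def SS (hn : 5 ≤ n) : Set (Perm (Fin n)) := {s | ∃ i : Fin n, s = sg hn i}

lemma one_def (hn : 5 ≤ n) : (⟨1, Nat.lt_of_lt_of_le (by norm_num) hn⟩ : Fin n) = 1 := by
  rw [Fin.ext_iff, Fin.val_one']
  exact (Nat.mod_eq_of_lt (by omega)).symm

lemma sg_def (hn : 5 ≤ n) (i : Fin n) : sg hn i = Equiv.swap i (i + 1) := by
  rw [sg, one_def hn]

lemma cast_ne_zero (hn : 5 ≤ n) {k : ℕ} (h0 : 0 < k) (h5 : k < 5) : ((k : ℕ) : Fin n) ≠ 0 := by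
  rw [Ne, Fin.natCast_eq_zero]
  intro h
  exact absurd (Nat.le_of_dvd h0 h) (by omega)

lemma one_ne (hn : 5 ≤ n) : (1 : Fin n) ≠ 0 := by
  have := cast_ne_zero (n := n) hn (k := 1) (by norm_num) (by norm_num)
  simpa using this

lemma two_ne (hn : 5 ≤ n) : (2 : Fin n) ≠ 0 := by
  have := cast_ne_zero (n := n) hn (k := 2) (by norm_num) (by norm_num)
  simpa using this

lemma three_ne (hn : 5 ≤ n) : (3 : Fin n) ≠ 0 := by
  have := cast_ne_zero (n := n) hn (k := 3) (by norm_num) (by norm_num)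
  simpa using this

lemma four_ne (hn : 5 ≤ n) : (4 : Fin n) ≠ 0 := by
  have := cast_ne_zero (n := n) hn (k := 4) (by norm_num) (by norm_num)
  simpa using this

lemma sg_inj (hn : 5 ≤ n) {i j : Fin n} (h : sg hn i = sg hn j) : i = j := by
  rw [sg_def, sg_def] at h
  have h1 := Equiv.ext_iff.mp h i
  rw [Equiv.swap_apply_left, Equiv.swap_apply_def] at h1
  split_ifs at h1 with h2 h3
  · exact h2
  · exact absurd (show (2:Fin n) = 0 by linear_combination h1 - h3) (two_ne hn)
  · exact absurd (show (1:Fin n) = 0 by linear_combination h1) (one_ne hn)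

lemma sg_inv (hn : 5 ≤ n) (i : Fin n) : (sg hn i)⁻¹ = sg hn i := Equiv.swap_inv _ _

lemma sg_mul_self (hn : 5 ≤ n) (i : Fin n) : sg hn i * sg hn i = 1 := by
  rw [sg]; exact Equiv.swap_mul_self _ _

lemma sg_ne_one (hn : 5 ≤ n) (i : Fin n) : sg hn i ≠ 1 := by
  rw [sg_def, Ne, Equiv.swap_eq_one_iff]
  intro h
  exact one_ne hn (by linear_combination -h)

lemma cay_adj (hn : 5 ≤ n) {x y : Perm (Fin n)} :
    (Cay n (SS hn)).Adj x y ↔ y * x⁻¹ ∈ SS hn := by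
  rw [Cay, SimpleGraph.fromRel_adj]
  constructor
  · rintro ⟨hne, h | h⟩
    · exact h
    · obtain ⟨i, hi⟩ := h
      refine ⟨i, ?_⟩
      have : (x * y⁻¹)⁻¹ = sg hn i := by rw [hi, sg_inv]
      simpa [mul_inv_rev] using this
  · rintro ⟨i, hi⟩
    refine ⟨?_, Or.inl ⟨i, hi⟩⟩
    intro he
    rw [he, mul_inv_cancel] at hi
    exact sg_ne_one hn i hi.symm

def Dis (a b : Fin n) : Prop := a ≠ b ∧ a ≠ b + 1 ∧ b ≠ a + 1

lemma trichotomy (a b : Fin n) : a = b ∨ b = a + 1 ∨ a = b + 1 ∨ Dis a b := by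
  by_cases h1 : a = b
  · exact Or.inl h1
  by_cases h2 : b = a + 1
  · exact Or.inr (Or.inl h2)
  by_cases h3 : a = b + 1
  · exact Or.inr (Or.inr (Or.inl h3))
  · exact Or.inr (Or.inr (Or.inr ⟨h1, h3, h2⟩))

lemma dis_symm {a b : Fin n} (hd : Dis a b) : Dis b a := ⟨Ne.symm hd.1, hd.2.2, hd.2.1⟩

section shapes
variable (hn : 5 ≤ n) (a b : Fin n)

lemma appP1 : (sg hn a * sg hn (a+1)) a = a + 1 := by
  have e1 : (Equiv.swap (a+1) (a+1+1)) a = a :=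
    Equiv.swap_apply_of_ne_of_ne (fun h => one_ne hn (by linear_combination -h))
      (fun h => two_ne hn (by linear_combination -h))
  rw [sg_def, sg_def, Equiv.Perm.mul_apply, e1, Equiv.swap_apply_left]

lemma appP2 : (sg hn a * sg hn (a+1)) (a+1) = a+1+1 := by
  have e2 : (Equiv.swap a (a+1)) (a+1+1) = a+1+1 :=
    Equiv.swap_apply_of_ne_of_ne (fun h => two_ne hn (by linear_combination h))
      (fun h => one_ne hn (by linear_combination h))
  rw [sg_def, sg_def, Equiv.Perm.mul_apply, Equiv.swap_apply_left, e2]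

lemma appP3 : (sg hn a * sg hn (a+1)) (a+1+1) = a := by
  have e1 : (Equiv.swap (a+1) (a+1+1)) (a+1+1) = a+1 := Equiv.swap_apply_right _ _
  rw [sg_def, sg_def, Equiv.Perm.mul_apply, e1, Equiv.swap_apply_right]

lemma appPfix (x : Fin n) (h1 : x ≠ a) (h2 : x ≠ a+1) (h3 : x ≠ a+1+1) :
    (sg hn a * sg hn (a+1)) x = x := by
  have e1 : (Equiv.swap (a+1) (a+1+1)) x = x := Equiv.swap_apply_of_ne_of_ne h2 h3
  rw [sg_def, sg_def, Equiv.Perm.mul_apply, e1, Equiv.swap_apply_of_ne_of_ne h1 h2]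

lemma appM1 : (sg hn (b+1) * sg hn b) b = b+1+1 := by
  have e1 : (Equiv.swap b (b+1)) b = b+1 := Equiv.swap_apply_left _ _
  rw [sg_def, sg_def, Equiv.Perm.mul_apply, e1, Equiv.swap_apply_left]

lemma appM2 : (sg hn (b+1) * sg hn b) (b+1) = b := by
  have e1 : (Equiv.swap b (b+1)) (b+1) = b := Equiv.swap_apply_right _ _
  rw [sg_def, sg_def, Equiv.Perm.mul_apply, e1,
    Equiv.swap_apply_of_ne_of_ne (fun h => one_ne hn (by linear_combination -h))
      (fun h => two_ne hn (by linear_combination -h))]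

lemma appM3 : (sg hn (b+1) * sg hn b) (b+1+1) = b+1 := by
  have e1 : (Equiv.swap b (b+1)) (b+1+1) = b+1+1 :=
    Equiv.swap_apply_of_ne_of_ne (fun h => two_ne hn (by linear_combination h))
      (fun h => one_ne hn (by linear_combination h))
  rw [sg_def, sg_def, Equiv.Perm.mul_apply, e1, Equiv.swap_apply_right]

lemma appMfix (x : Fin n) (h1 : x ≠ b) (h2 : x ≠ b+1) (h3 : x ≠ b+1+1) :
    (sg hn (b+1) * sg hn b) x = x := by
  have e1 : (Equiv.swap b (b+1)) x = x := Equiv.swap_apply_of_ne_of_ne h1 h2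
  rw [sg_def, sg_def, Equiv.Perm.mul_apply, e1, Equiv.swap_apply_of_ne_of_ne h2 h3]

variable {a b}

lemma appD1 (hd : Dis a b) : (sg hn a * sg hn b) a = a + 1 := by
  have e1 : (Equiv.swap b (b+1)) a = a := Equiv.swap_apply_of_ne_of_ne hd.1 hd.2.1
  rw [sg_def, sg_def, Equiv.Perm.mul_apply, e1, Equiv.swap_apply_left]

lemma appD2 (hd : Dis a b) : (sg hn a * sg hn b) (a+1) = a := by
  have e1 : (Equiv.swap b (b+1)) (a+1) = a+1 :=
    Equiv.swap_apply_of_ne_of_ne (Ne.symm hd.2.2) (fun h => hd.1 (by linear_combination h))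
  rw [sg_def, sg_def, Equiv.Perm.mul_apply, e1, Equiv.swap_apply_right]

lemma appD3 (hd : Dis a b) : (sg hn a * sg hn b) b = b + 1 := by
  have e1 : (Equiv.swap b (b+1)) b = b+1 := Equiv.swap_apply_left _ _
  rw [sg_def, sg_def, Equiv.Perm.mul_apply, e1,
    Equiv.swap_apply_of_ne_of_ne (Ne.symm hd.2.1) (fun h => hd.1 (by linear_combination -h))]

lemma appD4 (hd : Dis a b) : (sg hn a * sg hn b) (b+1) = b := by
  have e1 : (Equiv.swap b (b+1)) (b+1) = b := Equiv.swap_apply_right _ _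
  rw [sg_def, sg_def, Equiv.Perm.mul_apply, e1,
    Equiv.swap_apply_of_ne_of_ne (Ne.symm hd.1) hd.2.2]

lemma appDfix (hd : Dis a b) (x : Fin n) (h1 : x ≠ a) (h2 : x ≠ a+1) (h3 : x ≠ b)
    (h4 : x ≠ b+1) : (sg hn a * sg hn b) x = x := by
  have e1 : (Equiv.swap b (b+1)) x = x := Equiv.swap_apply_of_ne_of_ne h3 h4
  rw [sg_def, sg_def, Equiv.Perm.mul_apply, e1, Equiv.swap_apply_of_ne_of_ne h1 h2]

lemma appDinvol (hd : Dis a b) (x : Fin n) :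
    (sg hn a * sg hn b) ((sg hn a * sg hn b) x) = x := by
  by_cases h1 : x = a
  · rw [h1, appD1 hn hd, appD2 hn hd]
  by_cases h2 : x = a + 1
  · rw [h2, appD2 hn hd, appD1 hn hd]
  by_cases h3 : x = b
  · rw [h3, appD3 hn hd, appD4 hn hd]
  by_cases h4 : x = b + 1
  · rw [h4, appD4 hn hd, appD3 hn hd]
  · rw [appDfix hn hd x h1 h2 h3 h4, appDfix hn hd x h1 h2 h3 h4]

lemma dis_commute (hd : Dis a b) : sg hn a * sg hn b = sg hn b * sg hn a := by
  have hd' := dis_symm hd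
  ext x
  by_cases h1 : x = a
  · rw [h1, appD1 hn hd, appD3 hn hd']
  by_cases h2 : x = a + 1
  · rw [h2, appD2 hn hd, appD4 hn hd']
  by_cases h3 : x = b
  · rw [h3, appD3 hn hd, appD1 hn hd']
  by_cases h4 : x = b + 1
  · rw [h4, appD4 hn hd, appD2 hn hd']
  · rw [appDfix hn hd x h1 h2 h3 h4, appDfix hn hd' x h3 h4 h1 h2]

end shapes


lemma sg_mul_eq_one (hn : 5 ≤ n) {c d : Fin n} (h : sg hn c * sg hn d = 1) : c = d := by
  have : sg hn c = sg hn d := by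
    rw [← sg_inv hn d]
    exact eq_inv_of_mul_eq_one_left h
  exact sg_inj hn this

lemma sg_mul_eq_iff (hn : 5 ≤ n) {a b c d : Fin n} :
    sg hn a * sg hn b = sg hn c * sg hn d ↔
      ((a = c ∧ b = d) ∨ (a = b ∧ c = d) ∨ (Dis a b ∧ a = d ∧ b = c)) := by
  constructor
  · intro e
    rcases trichotomy a b with hab | hab | hab | hab
    · -- a = b : LHS = 1
      subst hab
      rw [sg_mul_self] at e
      exact Or.inr (Or.inl ⟨rfl, sg_mul_eq_one hn e.symm⟩)
    · -- b = a + 1 : shape P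
      subst hab
      rcases trichotomy c d with hcd | hcd | hcd | hcd
      · subst hcd
        rw [sg_mul_self] at e
        exact absurd (sg_mul_eq_one hn e) (fun h => one_ne hn (by linear_combination -h))
      · -- shape P = shape P
        subst hcd
        by_cases hac : a = c
        · exact Or.inl ⟨hac, by rw [hac]⟩
        have h0 : (sg hn c * sg hn (c+1)) a = a + 1 := by rw [← e]; exact appP1 hn a
        by_cases h1 : a = c + 1
        · have h2 : (sg hn c * sg hn (c+1)) (a+1) = a+1+1 := by rw [← e]; exact appP2 hn a
          rw [show a + 1 = c+1+1 by rw [h1]] at h2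
          rw [appP3 hn c] at h2
          exact absurd (show (3:Fin n) = 0 by linear_combination -h2) (three_ne hn)
        by_cases h2 : a = c + 1 + 1
        · rw [h2, appP3 hn c] at h0
          exact absurd (show (3:Fin n) = 0 by linear_combination -h0) (three_ne hn)
        · rw [appPfix hn c a hac h1 h2] at h0
          exact absurd (show (1:Fin n) = 0 by linear_combination -h0) (one_ne hn)
      · -- shape P = shape M
        subst hcd
        have h0 : (sg hn (d+1) * sg hn d) a = a + 1 := by rw [← e]; exact appP1 hn a
        by_cases h1 : a = d
        · rw [h1, appM1 hn d] at h0
          exact absurd (show (1:Fin n) = 0 by linear_combination h0) (one_ne hn)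
        by_cases h2 : a = d + 1
        · rw [h2, appM2 hn d] at h0
          exact absurd (show (2:Fin n) = 0 by linear_combination -h0) (two_ne hn)
        by_cases h3 : a = d + 1 + 1
        · rw [h3, appM3 hn d] at h0
          exact absurd (show (2:Fin n) = 0 by linear_combination -h0) (two_ne hn)
        · rw [appMfix hn d a h1 h2 h3] at h0
          exact absurd (show (1:Fin n) = 0 by linear_combination -h0) (one_ne hn)
      · -- shape P = shape D
        have h0 : (sg hn a * sg hn (a+1)) ((sg hn a * sg hn (a+1)) a) = a := by
          rw [e]; exact appDinvol hn hcd a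
        rw [appP1 hn a, appP2 hn a] at h0
        exact absurd (show (2:Fin n) = 0 by linear_combination h0) (two_ne hn)
    · -- a = b + 1 : shape M
      subst hab
      rcases trichotomy c d with hcd | hcd | hcd | hcd
      · subst hcd
        rw [sg_mul_self] at e
        exact absurd (sg_mul_eq_one hn e) (fun h => one_ne hn (by linear_combination h))
      · -- shape M = shape P
        subst hcd
        have h0 : (sg hn c * sg hn (c+1)) b = b+1+1 := by rw [← e]; exact appM1 hn b
        by_cases h1 : b = c
        · rw [h1, appP1 hn c] at h0
          exact absurd (show (1:Fin n) = 0 by linear_combination -h0) (one_ne hn)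
        by_cases h2 : b = c + 1
        · rw [h2, appP2 hn c] at h0
          exact absurd (show (1:Fin n) = 0 by linear_combination -h0) (one_ne hn)
        by_cases h3 : b = c + 1 + 1
        · rw [h3, appP3 hn c] at h0
          exact absurd (show (4:Fin n) = 0 by linear_combination -h0) (four_ne hn)
        · rw [appPfix hn c b h1 h2 h3] at h0
          exact absurd (show (2:Fin n) = 0 by linear_combination -h0) (two_ne hn)
      · -- shape M = shape M
        subst hcd
        by_cases hbd : b = d
        · exact Or.inl ⟨by rw [hbd], hbd⟩
        have h0 : (sg hn (d+1) * sg hn d) b = b+1+1 := by rw [← e]; exact appM1 hn b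
        by_cases h1 : b = d + 1
        · rw [h1, appM2 hn d] at h0
          exact absurd (show (3:Fin n) = 0 by linear_combination -h0) (three_ne hn)
        by_cases h2 : b = d + 1 + 1
        · rw [h2, appM3 hn d] at h0
          exact absurd (show (3:Fin n) = 0 by linear_combination -h0) (three_ne hn)
        · rw [appMfix hn d b hbd h1 h2] at h0
          exact absurd (show (2:Fin n) = 0 by linear_combination -h0) (two_ne hn)
      · -- shape M = shape D
        have h0 : (sg hn (b+1) * sg hn b) ((sg hn (b+1) * sg hn b) b) = b := by
          rw [e]; exact appDinvol hn hcd b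
        rw [appM1 hn b, appM3 hn b] at h0
        exact absurd (show (1:Fin n) = 0 by linear_combination h0) (one_ne hn)
    · -- Dis a b : shape D
      rcases trichotomy c d with hcd | hcd | hcd | hcd
      · subst hcd
        rw [sg_mul_self] at e
        have := sg_mul_eq_one hn e
        exact absurd this hab.1
      · -- shape D = shape P
        subst hcd
        have h0 : (sg hn c * sg hn (c+1)) ((sg hn c * sg hn (c+1)) c) = c := by
          rw [← e]; exact appDinvol hn hab c
        rw [appP1 hn c, appP2 hn c] at h0
        exact absurd (show (2:Fin n) = 0 by linear_combination h0) (two_ne hn)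
      · -- shape D = shape M
        subst hcd
        have h0 : (sg hn (d+1) * sg hn d) ((sg hn (d+1) * sg hn d) d) = d := by
          rw [← e]; exact appDinvol hn hab d
        rw [appM1 hn d, appM3 hn d] at h0
        exact absurd (show (1:Fin n) = 0 by linear_combination h0) (one_ne hn)
      · -- shape D = shape D
        by_cases hac : a = c
        · subst hac
          exact Or.inl ⟨rfl, sg_inj hn (mul_left_cancel e)⟩
        by_cases had : a = d
        · subst had
          rw [dis_commute hn hcd] at e
          exact Or.inr (Or.inr ⟨hab, rfl, sg_inj hn (mul_left_cancel e)⟩)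
        have h0 : (sg hn c * sg hn d) a = a + 1 := by rw [← e]; exact appD1 hn hab
        by_cases h1 : a = c + 1
        · rw [h1, appD2 hn hcd] at h0
          exact absurd (show (2:Fin n) = 0 by linear_combination -h0) (two_ne hn)
        by_cases h2 : a = d + 1
        · rw [h2, appD4 hn hcd] at h0
          exact absurd (show (2:Fin n) = 0 by linear_combination -h0) (two_ne hn)
        · rw [appDfix hn hcd a hac h1 had h2] at h0
          exact absurd (show (1:Fin n) = 0 by linear_combination -h0) (one_ne hn)
  · rintro (⟨rfl, rfl⟩ | ⟨rfl, rfl⟩ | ⟨hd, rfl, rfl⟩)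
    · rfl
    · rw [sg_mul_self, sg_mul_self]
    · exact dis_commute hn hd

/-- the set of common neighbours of `x` and `y` in the Cayley graph -/
def comm2 (hn : 5 ≤ n) (x y : Perm (Fin n)) : Set (Perm (Fin n)) :=
  {z | (Cay n (SS hn)).Adj x z ∧ (Cay n (SS hn)).Adj y z}

lemma comm2_map (hn : 5 ≤ n) {φ : Perm (Perm (Fin n))}
    (hφ : φ ∈ graphAut (Cay n (SS hn))) (x y : Perm (Fin n)) :
    comm2 hn (φ x) (φ y) = φ '' comm2 hn x y := by
  ext z
  constructor
  · rintro ⟨h1, h2⟩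
    refine ⟨φ.symm z, ⟨?_, ?_⟩, by simp⟩
    · exact (hφ x (φ.symm z)).mp (by simpa using h1)
    · exact (hφ y (φ.symm z)).mp (by simpa using h2)
  · rintro ⟨w, ⟨h1, h2⟩, rfl⟩
    exact ⟨(hφ x w).mpr h1, (hφ y w).mpr h2⟩

lemma mem_comm2_iff (hn : 5 ≤ n) {a b : Fin n} (hab : a ≠ b) (g z : Perm (Fin n)) :
    z ∈ comm2 hn g ((sg hn a * sg hn b) * g) ↔
      z = sg hn b * g ∨ (Dis a b ∧ z = sg hn a * g) := by
  constructor
  · rintro ⟨h1, h2⟩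
    rw [cay_adj hn] at h1 h2
    obtain ⟨v, hv⟩ := h1
    have hz : z = sg hn v * g := by
      have := congrArg (· * g) hv
      simpa [mul_assoc] using this
    obtain ⟨u, hu⟩ := h2
    have he : sg hn v * sg hn b = sg hn u * sg hn a := by
      have h3 : sg hn v * g * (g⁻¹ * ((sg hn b)⁻¹ * (sg hn a)⁻¹)) = sg hn u := by
        rw [← hz]; simpa [mul_inv_rev, mul_assoc] using hu
      rw [sg_inv, sg_inv] at h3
      have h4 := congrArg (· * (sg hn a)) h3
      simp only [mul_assoc] at h4 ⊢
      simp only [mul_inv_cancel_left, sg_mul_self, mul_one] at h4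
      rw [← h4]
    rcases (sg_mul_eq_iff hn).mp he with ⟨e1, e2⟩ | ⟨e1, e2⟩ | ⟨hd, e1, e2⟩
    · exact absurd e2 (Ne.symm hab)
    · exact Or.inl (hz.trans (by rw [e1]))
    · exact Or.inr ⟨e1 ▸ hd, hz.trans (by rw [e1])⟩
  · rintro (rfl | ⟨hd, rfl⟩)
    · constructor
      · rw [cay_adj hn]
        exact ⟨b, by simp [mul_assoc]⟩
      · rw [cay_adj hn]
        refine ⟨a, ?_⟩
        have h5 : (sg hn b * g) * (sg hn a * sg hn b * g)⁻¹ = sg hn b * (sg hn b * sg hn a) := by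
          simp [mul_inv_rev, sg_inv, mul_assoc]
        rw [h5, ← mul_assoc, sg_mul_self, one_mul]
    · constructor
      · rw [cay_adj hn]
        exact ⟨a, by simp [mul_assoc]⟩
      · rw [cay_adj hn]
        refine ⟨b, ?_⟩
        have h5 : (sg hn a * g) * (sg hn a * sg hn b * g)⁻¹ = sg hn a * (sg hn b * sg hn a) := by
          simp [mul_inv_rev, sg_inv, mul_assoc]
        rw [h5, ← mul_assoc, dis_commute hn hd, mul_assoc, sg_mul_self, mul_one]

lemma comm2_overlap (hn : 5 ≤ n) {a b : Fin n} (hov : b = a + 1 ∨ a = b + 1)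
    (g : Perm (Fin n)) :
    comm2 hn g ((sg hn a * sg hn b) * g) = {sg hn b * g} := by
  have hab : a ≠ b := by
    rcases hov with h | h
    · exact fun he => one_ne hn (by linear_combination -h - he)
    · exact fun he => one_ne hn (by linear_combination he - h)
  have hnd : ¬ Dis a b := by
    rintro ⟨d1, d2, d3⟩
    rcases hov with h | h
    · exact d3 h
    · exact d2 h
  ext z
  rw [mem_comm2_iff hn hab]
  simp only [Set.mem_singleton_iff]
  constructor
  · rintro (h | ⟨hd, _⟩)
    · exact h
    · exact absurd hd hnd
  · exact Or.inl

lemma comm2_dis (hn : 5 ≤ n) {a b : Fin n} (hd : Dis a b) (g : Perm (Fin n)) :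
    comm2 hn g ((sg hn a * sg hn b) * g) = {sg hn b * g, sg hn a * g} := by
  ext z
  rw [mem_comm2_iff hn hd.1]
  simp only [Set.mem_insert_iff, Set.mem_singleton_iff]
  constructor
  · rintro (h | ⟨_, h⟩)
    · exact Or.inl h
    · exact Or.inr h
  · rintro (h | h)
    · exact Or.inl h
    · exact Or.inr ⟨hd, h⟩

lemma mul_cancel_self_left (hn : 5 ≤ n) (i : Fin n) (x : Perm (Fin n)) :
    sg hn i * (sg hn i * x) = x := by
  rw [← mul_assoc, sg_mul_self, one_mul]

lemma sg_mul_right_inj (hn : 5 ≤ n) {u t : Fin n} {g : Perm (Fin n)}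
    (h : sg hn u * g = sg hn t * g) : u = t :=
  sg_inj hn (mul_right_cancel h)

lemma rigid_step (hn : 5 ≤ n) {φ : Perm (Perm (Fin n))}
    (hφ : φ ∈ graphAut (Cay n (SS hn))) {g : Perm (Fin n)} (hgg : φ g = g)
    (hN : ∀ i, φ (sg hn i * g) = sg hn i * g) (s t : Fin n) :
    φ (sg hn t * (sg hn s * g)) = sg hn t * (sg hn s * g) := by
  -- a common neighbour extraction
  have getu : ∀ t' : Fin n, ∃ u, φ (sg hn t' * (sg hn s * g)) = sg hn u * (sg hn s * g) := by
    intro t'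
    have hadj : (Cay n (SS hn)).Adj (sg hn s * g) (sg hn t' * (sg hn s * g)) :=
      (cay_adj hn).mpr ⟨t', mul_inv_cancel_right _ _⟩
    have h2 := (hφ _ _).mpr hadj
    rw [hN s] at h2
    obtain ⟨u, hu⟩ := (cay_adj hn).mp h2
    exact ⟨u, mul_inv_eq_iff_eq_mul.mp hu⟩
  -- the `t = s` case
  by_cases hts : t = s
  · subst hts
    rw [mul_cancel_self_left hn, hgg]
  -- vertices at "disjoint" distance-2 positions are fixed
  have fixdis : ∀ t' : Fin n, Dis t' s →
      φ (sg hn t' * (sg hn s * g)) = sg hn t' * (sg hn s * g) := by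
    intro t' hd
    obtain ⟨u, hx⟩ := getu t'
    have him : comm2 hn g (sg hn u * (sg hn s * g)) =
        φ '' comm2 hn g (sg hn t' * (sg hn s * g)) := by
      have h9 := comm2_map hn hφ g (sg hn t' * (sg hn s * g))
      rw [hgg, hx] at h9
      exact h9
    have hRHS : φ '' comm2 hn g (sg hn t' * (sg hn s * g)) =
        {sg hn s * g, sg hn t' * g} := by
      rw [← mul_assoc, comm2_dis hn hd g, Set.image_insert_eq, Set.image_singleton,
        hN s, hN t']
    rw [hRHS] at him
    rcases trichotomy u s with h | h | h | h
    · -- u = s : contradiction with injectivity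
      exfalso
      rw [h, mul_cancel_self_left hn] at hx
      have h3 := φ.injective (hx.trans hgg.symm)
      have h4 : sg hn t' * sg hn s = 1 := by
        rw [← mul_assoc] at h3
        have h5 : (sg hn t' * sg hn s) * g = 1 * g := by rw [h3, one_mul]
        exact mul_right_cancel h5
      exact hd.1 (sg_mul_eq_one hn h4)
    · -- s = u + 1 : overlap, singleton = pair, contradiction
      exfalso
      rw [← mul_assoc, comm2_overlap hn (Or.inl h) g] at him
      have hmem : sg hn t' * g ∈ ({sg hn s * g, sg hn t' * g} : Set (Perm (Fin n))) :=
        Set.mem_insert_of_mem _ rfl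
      rw [← him] at hmem
      exact hd.1 (sg_mul_right_inj hn (Set.mem_singleton_iff.mp hmem))
    · -- u = s + 1 : overlap, same contradiction
      exfalso
      rw [← mul_assoc, comm2_overlap hn (Or.inr h) g] at him
      have hmem : sg hn t' * g ∈ ({sg hn s * g, sg hn t' * g} : Set (Perm (Fin n))) :=
        Set.mem_insert_of_mem _ rfl
      rw [← him] at hmem
      exact hd.1 (sg_mul_right_inj hn (Set.mem_singleton_iff.mp hmem))
    · -- Dis u s : pair = pair, so u = t'
      rw [← mul_assoc, comm2_dis hn h g] at him
      have hmem : sg hn u * g ∈ ({sg hn s * g, sg hn t' * g} : Set (Perm (Fin n))) := by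
        rw [← him]
        exact Set.mem_insert_of_mem _ rfl
      rcases hmem with hh | hh
      · exact absurd (sg_mul_right_inj hn hh) h.1
      · rw [sg_mul_right_inj hn hh] at hx
        exact hx
  obtain ⟨u, hx⟩ := getu t
  -- common neighbours of g and the target
  have him : comm2 hn g (sg hn u * (sg hn s * g)) =
      φ '' comm2 hn g (sg hn t * (sg hn s * g)) := by
    have h9 := comm2_map hn hφ g (sg hn t * (sg hn s * g))
    rw [hgg, hx] at h9
    exact h9
  rcases trichotomy t s with h | h | h | h
  · exact absurd h hts
  · -- s = t + 1  (shape: t = s - 1)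
    obtain ⟨c, hc⟩ : ∃ c, t = c + 1 := ⟨t - 1, by ring⟩
    have hRHS : φ '' comm2 hn g (sg hn t * (sg hn s * g)) = {φ (sg hn s * g)} := by
      rw [← mul_assoc, comm2_overlap hn (Or.inl h) g, Set.image_singleton]
    rw [hRHS, hN s] at him
    rcases trichotomy u s with h2 | h2 | h2 | h2
    · -- u = s: injectivity contradiction
      exfalso
      rw [h2, mul_cancel_self_left hn] at hx
      have h3 := φ.injective (hx.trans hgg.symm)
      have h4 : sg hn t * sg hn s = 1 := by
        rw [← mul_assoc] at h3
        have h5 : (sg hn t * sg hn s) * g = 1 * g := by rw [h3, one_mul]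
        exact mul_right_cancel h5
      exact hts (sg_mul_eq_one hn h4)
    · -- s = u + 1 : then u = t, done
      have : u = t := by linear_combination h - h2
      rw [this] at hx
      exact hx
    · -- u = s + 1 : the hard pin-down, contradiction via w = sg c * (sg s * g)
      exfalso
      have hdw : Dis c s :=
        ⟨fun hh => two_ne hn (by linear_combination -hh - h - hc),
         fun hh => three_ne hn (by linear_combination -hh - h - hc),
         fun hh => one_ne hn (by linear_combination hh - h - hc)⟩
      have hw := fixdis c hdw
      have ratio1 : sg hn t * (sg hn s * g) =
          (sg hn t * sg hn c) * (sg hn c * (sg hn s * g)) := by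
        rw [mul_assoc, mul_cancel_self_left hn]
      have c1 : comm2 hn (sg hn c * (sg hn s * g)) (sg hn t * (sg hn s * g)) =
          {sg hn c * (sg hn c * (sg hn s * g))} := by
        rw [ratio1]
        exact comm2_overlap hn (Or.inr hc) _
      have him2 := comm2_map hn hφ (sg hn c * (sg hn s * g)) (sg hn t * (sg hn s * g))
      rw [hw, hx, c1, Set.image_singleton] at him2
      have hDis2 : Dis u c :=
        ⟨fun hh => three_ne hn (by linear_combination hh - h2 - h - hc),
         fun hh => two_ne hn (by linear_combination hh - h2 - h - hc),
         fun hh => four_ne hn (by linear_combination -hh - h2 - h - hc)⟩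
      have ratio2 : sg hn u * (sg hn s * g) =
          (sg hn u * sg hn c) * (sg hn c * (sg hn s * g)) := by
        rw [mul_assoc, mul_cancel_self_left hn]
      have c2 : comm2 hn (sg hn c * (sg hn s * g)) (sg hn u * (sg hn s * g)) =
          {sg hn c * (sg hn c * (sg hn s * g)), sg hn u * (sg hn c * (sg hn s * g))} := by
        rw [ratio2]
        exact comm2_dis hn hDis2 _
      rw [c2] at him2
      have m1 : sg hn c * (sg hn c * (sg hn s * g)) ∈
          ({φ (sg hn c * (sg hn c * (sg hn s * g)))} : Set (Perm (Fin n))) := by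
        rw [← him2]; exact Set.mem_insert _ _
      have m2 : sg hn u * (sg hn c * (sg hn s * g)) ∈
          ({φ (sg hn c * (sg hn c * (sg hn s * g)))} : Set (Perm (Fin n))) := by
        rw [← him2]; exact Set.mem_insert_of_mem _ rfl
      have he : u = c :=
        sg_mul_right_inj hn ((Set.mem_singleton_iff.mp m2).trans
          (Set.mem_singleton_iff.mp m1).symm)
      exact three_ne hn (by linear_combination he - h2 - h - hc)
    · -- Dis u s : singleton = pair contradiction
      exfalso
      rw [← mul_assoc, comm2_dis hn h2 g] at him
      have hmem : sg hn u * g ∈ ({sg hn s * g, sg hn u * g} : Set (Perm (Fin n))) :=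
        Set.mem_insert_of_mem _ rfl
      rw [him] at hmem
      exact h2.1 (sg_mul_right_inj hn (Set.mem_singleton_iff.mp hmem))
  · -- t = s + 1
    have hRHS : φ '' comm2 hn g (sg hn t * (sg hn s * g)) = {φ (sg hn s * g)} := by
      rw [← mul_assoc, comm2_overlap hn (Or.inr h) g, Set.image_singleton]
    rw [hRHS, hN s] at him
    rcases trichotomy u s with h2 | h2 | h2 | h2
    · exfalso
      rw [h2, mul_cancel_self_left hn] at hx
      have h3 := φ.injective (hx.trans hgg.symm)
      have h4 : sg hn t * sg hn s = 1 := by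
        rw [← mul_assoc] at h3
        have h5 : (sg hn t * sg hn s) * g = 1 * g := by rw [h3, one_mul]
        exact mul_right_cancel h5
      exact hts (sg_mul_eq_one hn h4)
    · -- s = u + 1 : the hard pin-down, contradiction via w = sg (s+1+1) * (sg s * g)
      exfalso
      have hdw : Dis (s+1+1) s :=
        ⟨fun hh => two_ne hn (by linear_combination hh),
         fun hh => one_ne hn (by linear_combination hh),
         fun hh => three_ne hn (by linear_combination -hh)⟩
      have hw := fixdis (s+1+1) hdw
      have ratio1 : sg hn t * (sg hn s * g) =
          (sg hn (s+1) * sg hn (s+1+1)) * (sg hn (s+1+1) * (sg hn s * g)) := by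
        rw [mul_assoc, mul_cancel_self_left hn, h]
      have c1 : comm2 hn (sg hn (s+1+1) * (sg hn s * g)) (sg hn t * (sg hn s * g)) =
          {sg hn (s+1+1) * (sg hn (s+1+1) * (sg hn s * g))} := by
        rw [ratio1]
        exact comm2_overlap hn (Or.inl rfl) _
      have him2 := comm2_map hn hφ (sg hn (s+1+1) * (sg hn s * g)) (sg hn t * (sg hn s * g))
      rw [hw, hx, c1, Set.image_singleton] at him2
      have hDis2 : Dis u (s+1+1) :=
        ⟨fun hh => three_ne hn (by linear_combination -hh - h2),
         fun hh => four_ne hn (by linear_combination -hh - h2),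
         fun hh => two_ne hn (by linear_combination hh - h2)⟩
      have ratio2 : sg hn u * (sg hn s * g) =
          (sg hn u * sg hn (s+1+1)) * (sg hn (s+1+1) * (sg hn s * g)) := by
        rw [mul_assoc, mul_cancel_self_left hn]
      have c2 : comm2 hn (sg hn (s+1+1) * (sg hn s * g)) (sg hn u * (sg hn s * g)) =
          {sg hn (s+1+1) * (sg hn (s+1+1) * (sg hn s * g)),
            sg hn u * (sg hn (s+1+1) * (sg hn s * g))} := by
        rw [ratio2]
        exact comm2_dis hn hDis2 _
      rw [c2] at him2
      have m1 : sg hn (s+1+1) * (sg hn (s+1+1) * (sg hn s * g)) ∈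
          ({φ (sg hn (s+1+1) * (sg hn (s+1+1) * (sg hn s * g)))} : Set (Perm (Fin n))) := by
        rw [← him2]; exact Set.mem_insert _ _
      have m2 : sg hn u * (sg hn (s+1+1) * (sg hn s * g)) ∈
          ({φ (sg hn (s+1+1) * (sg hn (s+1+1) * (sg hn s * g)))} : Set (Perm (Fin n))) := by
        rw [← him2]; exact Set.mem_insert_of_mem _ rfl
      have he : u = s+1+1 :=
        sg_mul_right_inj hn ((Set.mem_singleton_iff.mp m2).trans
          (Set.mem_singleton_iff.mp m1).symm)
      exact three_ne hn (by linear_combination -he - h2)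
    · -- u = s + 1 = t : done
      have : u = t := by linear_combination h2 - h
      rw [this] at hx
      exact hx
    · exfalso
      rw [← mul_assoc, comm2_dis hn h2 g] at him
      have hmem : sg hn u * g ∈ ({sg hn s * g, sg hn u * g} : Set (Perm (Fin n))) :=
        Set.mem_insert_of_mem _ rfl
      rw [him] at hmem
      exact h2.1 (sg_mul_right_inj hn (Set.mem_singleton_iff.mp hmem))
  · -- Dis t s
    exact fixdis t h

lemma SS_closure (hn : 5 ≤ n) : Submonoid.closure (SS hn) = ⊤ := by
  obtain ⟨m, rfl⟩ : ∃ m, n = m + 1 := ⟨n - 1, by omega⟩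
  rw [eq_top_iff, ← Equiv.Perm.mclosure_swap_castSucc_succ m]
  apply Submonoid.closure_le.mpr
  rintro x ⟨i, rfl⟩
  apply Submonoid.subset_closure
  refine ⟨i.castSucc, ?_⟩
  show Equiv.swap i.castSucc i.succ = _
  rw [sg_def]
  congr 1
  rw [Fin.ext_iff, Fin.val_add, Fin.val_one']
  simp only [Fin.coe_castSucc, Fin.val_succ]
  have h1 : (i : ℕ) < m := i.isLt
  have h2 : (1 : ℕ) % (m+1) = 1 := Nat.mod_eq_of_lt (by omega)
  rw [h2]
  exact (Nat.mod_eq_of_lt (by omega)).symm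

lemma rigid (hn : 5 ≤ n) {φ : Perm (Perm (Fin n))}
    (hφ : φ ∈ graphAut (Cay n (SS hn))) (h1 : φ 1 = 1)
    (hS : ∀ i, φ (sg hn i) = sg hn i) : φ = 1 := by
  have main : ∀ g : Perm (Fin n), φ g = g ∧ ∀ i, φ (sg hn i * g) = sg hn i * g := by
    intro g
    have hg : g ∈ Submonoid.closure (SS hn) := by rw [SS_closure hn]; trivial
    induction hg using Submonoid.closure_induction_left with
    | one => exact ⟨h1, fun i => by rw [mul_one]; exact hS i⟩
    | mul_left x hx y hy ih =>
        obtain ⟨s, rfl⟩ := hx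
        exact ⟨ih.2 s, fun t => rigid_step hn hφ ih.1 ih.2 s t⟩
  ext x
  simp [main x |>.1]

lemma stab_sg (hn : 5 ≤ n) {φ : Perm (Perm (Fin n))}
    (hφ : φ ∈ graphAut (Cay n (SS hn))) (h1 : φ 1 = 1) (i : Fin n) :
    ∃ j, φ (sg hn i) = sg hn j := by
  have hadj : (Cay n (SS hn)).Adj 1 (sg hn i) := (cay_adj hn).mpr ⟨i, by simp⟩
  have h2 := (hφ 1 (sg hn i)).mpr hadj
  rw [h1] at h2
  obtain ⟨j, hj⟩ := (cay_adj hn).mp h2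
  exact ⟨j, by simpa using hj⟩

lemma step_pres (hn : 5 ≤ n) {φ : Perm (Perm (Fin n))}
    (hφ : φ ∈ graphAut (Cay n (SS hn))) (h1 : φ 1 = 1) {f : Fin n → Fin n}
    (hf : ∀ i, φ (sg hn i) = sg hn (f i)) (hinj : Function.Injective f) (i : Fin n) :
    f (i+1) = f i + 1 ∨ f i = f (i+1) + 1 := by
  have e0 : (sg hn (i+1) * sg hn i) * sg hn i = sg hn (i+1) := by
    rw [mul_assoc, sg_mul_self, mul_one]
  have c1 := comm2_overlap hn (a := i+1) (b := i) (Or.inr rfl) (sg hn i)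
  rw [e0, sg_mul_self] at c1
  have him := comm2_map hn hφ (sg hn i) (sg hn (i+1))
  rw [hf i, hf (i+1), c1, Set.image_singleton, h1] at him
  rcases trichotomy (f (i+1)) (f i) with h | h | h | h
  · exact absurd (hinj h) (fun hh => one_ne hn (by linear_combination hh))
  · exact Or.inr h
  · exact Or.inl h
  · exfalso
    have e1 : (sg hn (f (i+1)) * sg hn (f i)) * sg hn (f i) = sg hn (f (i+1)) := by
      rw [mul_assoc, sg_mul_self, mul_one]
    have c2 := comm2_dis hn h (sg hn (f i))
    rw [e1, sg_mul_self] at c2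
    rw [c2] at him
    have hm : sg hn (f (i+1)) * sg hn (f i) ∈ ({1} : Set (Perm (Fin n))) := by
      rw [← him]; exact Set.mem_insert_of_mem _ rfl
    exact h.1 (sg_mul_eq_one hn (Set.mem_singleton_iff.mp hm))

lemma f_form (hn : 5 ≤ n) {f : Fin n → Fin n} (hinj : Function.Injective f)
    (hstep : ∀ i, f (i+1) = f i + 1 ∨ f i = f (i+1) + 1) :
    (∀ i, f i = f 0 + i) ∨ (∀ i, f i = f 0 - i) := by
  rcases hstep 0 with h0 | h0
  · left
    have key : ∀ m : ℕ, f ((m : ℕ) : Fin n) = f 0 + ((m : ℕ) : Fin n) ∧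
        f (((m+1 : ℕ)) : Fin n) = f 0 + (((m+1 : ℕ)) : Fin n) := by
      intro m
      induction m with
      | zero =>
        refine ⟨by simp, ?_⟩
        have h0' : f (0 + 1 : Fin n) = f 0 + (0 + 1 : Fin n) := by
          rw [zero_add]
          simpa using h0
        simpa using h0'
      | succ m ih =>
        refine ⟨ih.2, ?_⟩
        have hc : (((m+1+1 : ℕ)) : Fin n) = (((m+1 : ℕ)) : Fin n) + 1 := by push_cast; ring
        rcases hstep (((m+1 : ℕ)) : Fin n) with h | h
        · rw [hc, h, ih.2]; ring
        · exfalso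
          have e2 : f ((((m+1:ℕ)) : Fin n) + 1) = f (((m:ℕ)) : Fin n) := by
            rw [ih.1]
            have h3 := ih.2
            rw [h] at h3
            push_cast at h3 ⊢
            linear_combination h3
          have h4 := hinj e2
          rw [← hc] at h4
          push_cast at h4
          exact two_ne hn (by linear_combination h4)
    intro i
    have h5 := (key i.val).1
    rwa [Fin.cast_val_eq_self] at h5
  · right
    have h0' : f (0 + 1 : Fin n) = f 0 - (0+1 : Fin n) := by
      linear_combination -h0
    have key : ∀ m : ℕ, f ((m : ℕ) : Fin n) = f 0 - ((m : ℕ) : Fin n) ∧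
        f (((m+1 : ℕ)) : Fin n) = f 0 - (((m+1 : ℕ)) : Fin n) := by
      intro m
      induction m with
      | zero =>
        refine ⟨by simp, by simpa using h0'⟩
      | succ m ih =>
        refine ⟨ih.2, ?_⟩
        have hc : (((m+1+1 : ℕ)) : Fin n) = (((m+1 : ℕ)) : Fin n) + 1 := by push_cast; ring
        rcases hstep (((m+1 : ℕ)) : Fin n) with h | h
        · exfalso
          have e2 : f ((((m+1:ℕ)) : Fin n) + 1) = f (((m:ℕ)) : Fin n) := by
            rw [ih.1, h, ih.2]
            push_cast
            ring
          have h4 := hinj e2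
          rw [← hc] at h4
          push_cast at h4
          exact two_ne hn (by linear_combination h4)
        · rw [hc]
          have h3 := ih.2
          rw [h] at h3
          push_cast at h3 ⊢
          linear_combination h3
    intro i
    have h5 := (key i.val).1
    rwa [Fin.cast_val_eq_self] at h5

lemma exists_ne_ne (hn : 5 ≤ n) (a c : Fin n) : ∃ b : Fin n, b ≠ a ∧ b ≠ c := by
  have hc2 : ({a, c} : Finset (Fin n)).card ≤ 2 := by
    refine le_trans (Finset.card_insert_le _ _) ?_
    simp
  have h2 : (({a, c} : Finset (Fin n))ᶜ).Nonempty := by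
    rw [← Finset.card_pos, Finset.card_compl, Fintype.card_fin]
    omega
  obtain ⟨b, hb⟩ := h2
  simp only [Finset.mem_compl, Finset.mem_insert, Finset.mem_singleton, not_or] at hb
  exact ⟨b, hb.1, hb.2⟩

lemma center_triv (hn : 5 ≤ n) {z : Perm (Fin n)}
    (hz : ∀ x : Perm (Fin n), z * x = x * z) : z = 1 := by
  apply Equiv.ext
  intro a
  simp only [Perm.one_apply]
  by_contra hza
  obtain ⟨b, hb1, hb2⟩ := exists_ne_ne hn a (z a)
  have e : Equiv.swap (z a) (z b) = Equiv.swap a b := by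
    rw [Equiv.swap_apply_apply, hz (Equiv.swap a b), mul_inv_cancel_right]
  have hza' : z a ≠ a := hza
  have hzb' : z a ≠ b := fun h => hb2 h.symm
  have e2 := Equiv.ext_iff.mp e (z a)
  rw [Equiv.swap_apply_left] at e2
  have e3 : (Equiv.swap a b) (z a) = z a := Equiv.swap_apply_of_ne_of_ne hza' hzb'
  exact hb1 (z.injective (e2.trans e3))

/-- the additive equivalence between `ZMod n` and `Fin n` -/
def zf : ZMod n ≃+ Fin n where
  toFun a := ⟨a.val, ZMod.val_lt a⟩
  invFun i := ((i.val : ℕ) : ZMod n)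
  left_inv a := ZMod.natCast_rightInverse a
  right_inv i := Fin.val_injective (ZMod.val_cast_of_lt i.isLt)
  map_add' a b := by
    apply Fin.val_injective
    simp only [Fin.val_add]
    exact ZMod.val_add a b

def rhoFun : DihedralGroup n → Perm (Fin n)
  | DihedralGroup.r i => Equiv.subRight ((zf i : Fin n))
  | DihedralGroup.sr i => Equiv.subLeft ((zf i : Fin n))

lemma rhoFun_mul (d e : DihedralGroup n) : rhoFun (d * e) = rhoFun d * rhoFun e := by
  rcases d with i | i <;> rcases e with j | j <;>
    apply Equiv.ext <;> intro x <;>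
    simp only [DihedralGroup.r_mul_r, DihedralGroup.r_mul_sr, DihedralGroup.sr_mul_r,
      DihedralGroup.sr_mul_sr, rhoFun, Equiv.Perm.mul_apply, Equiv.subRight_apply,
      Equiv.subLeft_apply, map_add, map_sub] <;>
    ring

def rho : DihedralGroup n →* Perm (Fin n) where
  toFun := rhoFun
  map_one' := by
    rw [DihedralGroup.one_def]
    apply Equiv.ext
    intro x
    simp [rhoFun]
  map_mul' := rhoFun_mul

lemma rho_r_apply (k : ZMod n) (x : Fin n) : rho (DihedralGroup.r k) x = x - zf k := rfl

lemma rho_sr_apply (k : ZMod n) (x : Fin n) : rho (DihedralGroup.sr k) x = zf k - x := rfl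

lemma rho_ker (hn : 5 ≤ n) (d : DihedralGroup n) (hd : rho d = 1) : d = 1 := by
  rcases d with k | k
  · have h1 := Equiv.ext_iff.mp hd 0
    rw [rho_r_apply] at h1
    simp only [Perm.one_apply, zero_sub, neg_eq_zero] at h1
    have : k = 0 := by
      have := zf.injective (a₁ := k) (a₂ := 0) (by rw [map_zero]; exact h1)
      exact this
    rw [this, DihedralGroup.one_def]
  · exfalso
    have h1 := Equiv.ext_iff.mp hd 0
    have h2 := Equiv.ext_iff.mp hd 1
    rw [rho_sr_apply] at h1 h2
    simp only [Perm.one_apply, sub_zero] at h1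
    simp only [Perm.one_apply] at h2
    rw [h1] at h2
    exact two_ne hn (by linear_combination -h2)

lemma conj_sg (hn : 5 ≤ n) (b : Perm (Fin n)) {i j : Fin n}
    (h : (b i = j ∧ b (i+1) = j+1) ∨ (b i = j + 1 ∧ b (i+1) = j)) :
    b * sg hn i * b⁻¹ = sg hn j := by
  rw [sg_def, sg_def, ← Equiv.swap_apply_apply]
  rcases h with ⟨h1, h2⟩ | ⟨h1, h2⟩
  · rw [h1, h2]
  · rw [h1, h2, Equiv.swap_comm]

lemma rho_conj (hn : 5 ≤ n) (d : DihedralGroup n) (i : Fin n) :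
    ∃ j, rho d * sg hn i * (rho d)⁻¹ = sg hn j := by
  rcases d with k | k
  · refine ⟨i - zf k, conj_sg hn _ (Or.inl ⟨rho_r_apply k i, ?_⟩)⟩
    rw [rho_r_apply]
    ring
  · refine ⟨zf k - i - 1, conj_sg hn _ (Or.inr ⟨?_, ?_⟩)⟩
    · rw [rho_sr_apply]
      ring
    · rw [rho_sr_apply]
      ring

lemma conj_mem_SS (hn : 5 ≤ n) (d : DihedralGroup n) {w : Perm (Fin n)} (hw : w ∈ SS hn) :
    rho d * w * (rho d)⁻¹ ∈ SS hn := by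
  obtain ⟨i, rfl⟩ := hw
  obtain ⟨j, hj⟩ := rho_conj hn d i
  exact ⟨j, hj⟩

lemma conj_mem_SS_iff (hn : 5 ≤ n) (d : DihedralGroup n) (w : Perm (Fin n)) :
    rho d * w * (rho d)⁻¹ ∈ SS hn ↔ w ∈ SS hn := by
  constructor
  · intro h
    have h2 := conj_mem_SS hn d⁻¹ h
    rw [map_inv] at h2
    simpa [mul_assoc] using h2
  · exact conj_mem_SS hn d

/-- the basic automorphism `x ↦ b * x * a⁻¹` -/
def EE (a b : Perm (Fin n)) : Perm (Perm (Fin n)) := Equiv.mulLeft b * Equiv.mulRight a⁻¹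

lemma EE_apply (a b x : Perm (Fin n)) : EE a b x = b * x * a⁻¹ := by
  simp [EE, mul_assoc]

lemma EE_mem (hn : 5 ≤ n) (a : Perm (Fin n)) (d : DihedralGroup n) :
    EE a (rho d) ∈ graphAut (Cay n (SS hn)) := by
  intro x y
  rw [cay_adj hn, cay_adj hn]
  have hr : EE a (rho d) y * (EE a (rho d) x)⁻¹ = rho d * (y * x⁻¹) * (rho d)⁻¹ := by
    rw [EE_apply, EE_apply]
    simp [mul_inv_rev, mul_assoc]
  rw [hr]
  exact conj_mem_SS_iff hn d (y * x⁻¹)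

def Phi (hn : 5 ≤ n) : Perm (Fin n) × DihedralGroup n →* graphAut (Cay n (SS hn)) where
  toFun p := ⟨EE p.1 (rho p.2), EE_mem hn p.1 p.2⟩
  map_one' := by
    apply Subtype.ext
    apply Equiv.ext
    intro x
    simp [EE_apply]
  map_mul' p q := by
    apply Subtype.ext
    apply Equiv.ext
    intro x
    show EE (p.1 * q.1) (rho (p.2 * q.2)) x = EE p.1 (rho p.2) (EE q.1 (rho q.2) x)
    rw [EE_apply, EE_apply, EE_apply, map_mul]
    simp [mul_inv_rev, mul_assoc]

lemma Phi_inj (hn : 5 ≤ n) : Function.Injective (Phi hn) := by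
  rw [injective_iff_map_eq_one]
  rintro ⟨a, d⟩ h
  have h1 : EE a (rho d) = 1 := congrArg Subtype.val h
  have h2 : ∀ x : Perm (Fin n), rho d * x * a⁻¹ = x := by
    intro x
    have h3 := Equiv.ext_iff.mp h1 x
    rwa [EE_apply] at h3
  have h3 : a = rho d := by
    have h4 := h2 1
    rw [mul_one] at h4
    exact (mul_inv_eq_one.mp h4).symm
  have h4 : ∀ x : Perm (Fin n), rho d * x = x * rho d := by
    intro x
    have h5 := h2 x
    have h6 := congrArg (· * a) h5
    simp only [inv_mul_cancel_right] at h6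
    rw [h3] at h6
    exact h6
  have h5 : rho d = 1 := center_triv hn h4
  have h6 : a = 1 := by rw [h3, h5]
  have h7 : d = 1 := rho_ker hn d h5
  simp [Prod.ext_iff, h6, h7]

lemma EE_inv_apply (a b x : Perm (Fin n)) : (EE a b)⁻¹ x = b⁻¹ * x * a := by
  have h1 : EE a b (b⁻¹ * x * a) = x := by
    rw [EE_apply]
    group
  conv_lhs => rw [← h1]
  exact Equiv.symm_apply_apply _ _

lemma Phi_surj (hn : 5 ≤ n) : Function.Surjective (Phi hn) := by
  rintro ⟨φ, hφ⟩
  set g := φ 1 with hg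
  set ψsub : graphAut (Cay n (SS hn)) := Phi hn (g, 1) * ⟨φ, hφ⟩ with hψdef
  have hψapp : ∀ x, (ψsub : Perm (Perm (Fin n))) x = φ x * g⁻¹ := by
    intro x
    show EE g (rho 1) (φ x) = φ x * g⁻¹
    rw [map_one, EE_apply, one_mul]
  have hψ1 : (ψsub : Perm (Perm (Fin n))) 1 = 1 := by
    rw [hψapp, ← hg, mul_inv_cancel]
  choose f hf using stab_sg hn ψsub.2 hψ1
  have hinj : Function.Injective f := by
    intro i j h
    have h2 : (ψsub : Perm (Perm (Fin n))) (sg hn i) =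
        (ψsub : Perm (Perm (Fin n))) (sg hn j) := by
      rw [hf i, hf j, h]
    exact sg_inj hn ((ψsub : Perm (Perm (Fin n))).injective h2)
  have hstep := step_pres hn ψsub.2 hψ1 hf hinj
  have hform := f_form hn hinj hstep
  have hD : ∃ d : DihedralGroup n, ∀ i, rho d * sg hn i * (rho d)⁻¹ = sg hn (f i) := by
    rcases hform with hpl | hmi
    · refine ⟨DihedralGroup.r (zf.symm (- f 0)), fun i => conj_sg hn _ (Or.inl ⟨?_, ?_⟩)⟩
      · rw [rho_r_apply, AddEquiv.apply_symm_apply]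
        linear_combination - hpl i
      · rw [rho_r_apply, AddEquiv.apply_symm_apply]
        linear_combination - hpl i
    · refine ⟨DihedralGroup.sr (zf.symm (f 0 + 1)), fun i => conj_sg hn _ (Or.inr ⟨?_, ?_⟩)⟩
      · rw [rho_sr_apply, AddEquiv.apply_symm_apply]
        linear_combination - hmi i
      · rw [rho_sr_apply, AddEquiv.apply_symm_apply]
        linear_combination - hmi i
  obtain ⟨d, hconj⟩ := hD
  set ξ : graphAut (Cay n (SS hn)) := (Phi hn (rho d, d))⁻¹ * ψsub with hξdef
  have hξapp : ∀ x, (ξ : Perm (Perm (Fin n))) x =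
      (rho d)⁻¹ * ((ψsub : Perm (Perm (Fin n))) x) * rho d := by
    intro x
    show (EE (rho d) (rho d))⁻¹ ((ψsub : Perm (Perm (Fin n))) x) = _
    rw [EE_inv_apply]
  have hξ1 : (ξ : Perm (Perm (Fin n))) 1 = 1 := by
    rw [hξapp, hψ1, mul_one, inv_mul_cancel]
  have hξS : ∀ i, (ξ : Perm (Perm (Fin n))) (sg hn i) = sg hn i := by
    intro i
    rw [hξapp, hf i, ← hconj i]
    simp [mul_assoc]
  have hone : (ξ : Perm (Perm (Fin n))) = 1 := rigid hn ξ.2 hξ1 hξS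
  have hξeq : ξ = 1 := Subtype.ext hone
  rw [hξdef] at hξeq
  have hPsi : Phi hn (rho d, d) = ψsub := inv_mul_eq_one.mp hξeq
  refine ⟨(g⁻¹ * rho d, d), ?_⟩
  have hsplit : ((g⁻¹ * rho d, d) : Perm (Fin n) × DihedralGroup n) =
      ((g, 1) : Perm (Fin n) × DihedralGroup n)⁻¹ * (rho d, d) := by
    simp [Prod.ext_iff]
  rw [hsplit, map_mul, map_inv, hPsi, hψdef, inv_mul_cancel_left]

end MBS

/-- For all `n ≥ 5`, the automorphism group of the modified
bubble-sort graph of dimension `n` (the Cayley graph of `Sₙ` generated by the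
`n` cyclically adjacent transpositions `swap i (i+1 mod n)`) is isomorphic to
the direct product `Sₙ × D₂ₙ`. -/
theorem aut_modifiedBubbleSort_eq_prod_dihedral (n : ℕ) (hn : 5 ≤ n) :
    Nonempty
      ((graphAut (Cay n
          {s : Equiv.Perm (Fin n) | ∃ i : Fin n, s = Equiv.swap i (i + ⟨1, by omega⟩)})) ≃*
        Equiv.Perm (Fin n) × DihedralGroup n) := by
  haveI : NeZero n := ⟨by omega⟩
  exact ⟨(MulEquiv.ofBijective (MBS.Phi (n := n) hn)
    ⟨MBS.Phi_inj hn, MBS.Phi_surj hn⟩).symm⟩
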